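/- Let (X, Π) be a weighted pure d-dimensional simplicial complex. For every 0 ≤ k ≤ d−1, the operator inequality N_k − P∨_k ⪯_{Π_k} γ_{k−1} · (I − P∨_k) holds; that is, for every f ∈ ℝ^{X(k)}, ⟨f, (N_k − P∨_k) f⟩_{Π_k} ≤ γ_{k−1} · ⟨f, (I − P∨_k) f⟩_{Π_k}. -/

import Mathlib

open Finset

/-- A weighted pure `d`-dimensional simplicial complex on a finite ground set `V`.
Faces are finsets; a face of cardinality `m` has dimension `m - 1` (so `X(j)` is the
set of faces of cardinality `j + 1`).  The family of faces is downward closed, every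
face is contained in a face of cardinality `d + 1` (purity), and a probability
distribution `Π = Π_d` (positive weights summing to `1`) is given on the
top-dimensional faces. -/
structure WSC (V : Type*) [DecidableEq V] [Fintype V] (d : ℕ) where
  faces : Finset (Finset V)
  empty_mem : ∅ ∈ faces
  down_closed : ∀ β ∈ faces, ∀ α ⊆ β, α ∈ faces
  pure : ∀ α ∈ faces, ∃ β ∈ faces, α ⊆ β ∧ β.card = d + 1
  dim_le : ∀ α ∈ faces, α.card ≤ d + 1
  weight : Finset V → ℝ
  weight_pos : ∀ β ∈ faces, β.card = d + 1 → 0 < weight β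
  weight_zero : ∀ β : Finset V, β ∉ faces ∨ β.card ≠ d + 1 → weight β = 0
  weight_sum : ∑ β ∈ faces.filter (fun β => β.card = d + 1), weight β = 1

namespace WSC

variable {V : Type*} [DecidableEq V] [Fintype V] {d : ℕ}

/-- Auxiliary recursion for the marginal distributions: `Waux X t` is the marginal
distribution `Π_{d - t}` on faces of cardinality `d + 1 - t`, defined by
`Π_j(α) = (1/(j+2)) ∑_{β ∈ X(j+1), β ⊇ α} Π_{j+1}(β)`. -/
noncomputable def Waux (X : WSC V d) : ℕ → Finset V → ℝ
  | 0 => X.weight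
  | (t + 1) => fun α =>
      (1 / ((d + 1 - t : ℕ) : ℝ)) *
        ∑ β ∈ X.faces.filter (fun β => α ⊆ β ∧ β.card = d + 1 - t), X.Waux t β

/-- `X.W m α` is the marginal probability `Π_{m-1}(α)` of the face `α` of cardinality
`m` (dimension `m - 1`). -/
noncomputable def W (X : WSC V d) (m : ℕ) : Finset V → ℝ := X.Waux (d + 1 - m)

/-- The inner product `⟨f, g⟩_{Π_{m-1}}` on `ℝ^{X(m-1)}` (faces of cardinality `m`). -/
noncomputable def inn (X : WSC V d) (m : ℕ) (f g : Finset V → ℝ) : ℝ :=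
  ∑ α ∈ X.faces.filter (fun α => α.card = m), X.W m α * f α * g α

/-- The up operator `U_j`: `(U_j f)(β) = (1/(j+2)) ∑_{x ∈ β} f(β \ {x})`, for `β` of
cardinality `j + 2`.  (The formula is uniform in the cardinality of `β`.) -/
noncomputable def upOp (f : Finset V → ℝ) : Finset V → ℝ :=
  fun β => (1 / (β.card : ℝ)) * ∑ x ∈ β, f (β.erase x)

/-- The down operator `D_{j+1}`:
`(D_{j+1} g)(α) = ∑_{β ∈ X(j+1), β ⊇ α} Π_{j+1}(β) g(β) / ((j+2) Π_j(α))`, for `α` of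
cardinality `j + 1`.  (The formula is uniform in the cardinality of `α`.) -/
noncomputable def downOp (X : WSC V d) (g : Finset V → ℝ) : Finset V → ℝ :=
  fun α => ∑ β ∈ X.faces.filter (fun β => α ⊆ β ∧ β.card = α.card + 1),
      (X.W (α.card + 1) β * g β) / (((α.card : ℝ) + 1) * X.W α.card α)

/-- The down-up walk `P∨_k = U_{k-1} D_k`, acting on functions on `X(k)` (faces of
cardinality `k + 1`). -/
noncomputable def downUp (X : WSC V d) (f : Finset V → ℝ) : Finset V → ℝ :=
  upOp (X.downOp f)

/-- The up-down walk `P∧_k = D_{k+1} U_k`, acting on functions on `X(k)` (faces of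
cardinality `k + 1`). -/
noncomputable def upDown (X : WSC V d) (f : Finset V → ℝ) : Finset V → ℝ :=
  X.downOp (upOp f)

/-- The `k`-th non-lazy up-down walk `N_k = ((k+2)/(k+1)) (P∧_k - (1/(k+2)) I)`. -/
noncomputable def nonLazy (X : WSC V d) (k : ℕ) (f : Finset V → ℝ) : Finset V → ℝ :=
  fun α => (((k : ℝ) + 2) / ((k : ℝ) + 1)) * (X.upDown f α - (1 / ((k : ℝ) + 2)) * f α)

/-- The up-down walk `U_{a,b} = D_{a+1} ⋯ D_b · U_{b-1} ⋯ U_a` on `X(a)` through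
`X(b)`, where `t = b - a`. -/
noncomputable def upDownAB (X : WSC V d) (t : ℕ) (f : Finset V → ℝ) : Finset V → ℝ :=
  (X.downOp)^[t] (upOp^[t] f)

/-- The second largest eigenvalue of a row-stochastic operator `M` on `ℝ^{X(m-1)}`
(faces of cardinality `m`) which is self-adjoint with respect to `⟨·,·⟩_{Π_{m-1}}`
and has stationary distribution `Π_{m-1}`: by the variational principle it is the
supremum of the Rayleigh quotients of (nonzero) functions orthogonal to the
constant function `1`. -/
noncomputable def lam2 (X : WSC V d) (m : ℕ) (M : (Finset V → ℝ) → Finset V → ℝ) : ℝ :=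
  sSup { r : ℝ | ∃ f : Finset V → ℝ,
    X.inn m f (fun _ => 1) = 0 ∧ X.inn m f f ≠ 0 ∧
    r = X.inn m f (M f) / X.inn m f f }

/-- The vertices of the link `X_α`: those `x ∉ α` with `α ∪ {x} ∈ X`. -/
def linkVerts (X : WSC V d) (α : Finset V) : Finset V :=
  Finset.univ.filter (fun x => x ∉ α ∧ insert x α ∈ X.faces)

/-- The link distribution `Π^α_l(τ) = Π_{j+1+l}(α ∪ τ) / (C(|α ∪ τ|, |α|) · Π_j(α))`
for a face `α` of dimension `j` and `τ ∈ X_α(l)`. -/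
noncomputable def linkPi (X : WSC V d) (α τ : Finset V) : ℝ :=
  X.W (α ∪ τ).card (α ∪ τ) / ((Nat.choose (α ∪ τ).card α.card : ℝ) * X.W α.card α)

/-- The random walk matrix `M_α` of the graph of the link `X_α`, with entries
`M_α(x, y) = Π^α_1({x, y}) / (2 Π^α_0(x))` for `{x, y} ∈ X_α(1)` and `0` otherwise,
viewed as an operator on functions on the vertices of the link. -/
noncomputable def linkWalk (X : WSC V d) (α : Finset V) (f : V → ℝ) : V → ℝ :=
  fun x => ∑ y ∈ (X.linkVerts α).filter
      (fun y => y ≠ x ∧ insert y (insert x α) ∈ X.faces),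
    (X.linkPi α {x, y} / (2 * X.linkPi α {x})) * f y

/-- The projector `J_α` onto the constant functions on the link: `J_α g` is the
constant function with value `E_{x ∼ Π^α_0}[g(x)]`. -/
noncomputable def linkJ (X : WSC V d) (α : Finset V) (g : V → ℝ) : V → ℝ :=
  fun _ => ∑ x ∈ X.linkVerts α, X.linkPi α {x} * g x

/-- The inner product `⟨g, h⟩_{Π^α_0}` on functions on the vertices of the link. -/
noncomputable def linkInner (X : WSC V d) (α : Finset V) (g h : V → ℝ) : ℝ :=
  ∑ x ∈ X.linkVerts α, X.linkPi α {x} * g x * h x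

/-- The second largest eigenvalue `λ₂(M_α)` of the random walk matrix of the graph
of the link `X_α`, via the variational principle. -/
noncomputable def linkLam2 (X : WSC V d) (α : Finset V) : ℝ :=
  sSup { r : ℝ | ∃ f : V → ℝ,
    X.linkInner α f (fun _ => 1) = 0 ∧ X.linkInner α f f ≠ 0 ∧
    r = X.linkInner α f (X.linkWalk α f) / X.linkInner α f f }

/-- `X.gammaC m` is `γ_{m-1} = max_{α ∈ X(m-1)} λ₂(M_α)`, the maximum over faces `α`
of cardinality `m` (dimension `m - 1`) of the second eigenvalue of the link walk. -/
noncomputable def gammaC (X : WSC V d) (m : ℕ) : ℝ :=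
  sSup { r : ℝ | ∃ α ∈ X.faces, α.card = m ∧ r = X.linkLam2 α }

end WSC
namespace WSC

variable {V : Type*} [DecidableEq V] [Fintype V] {d : ℕ}

theorem weight_nonneg (X : WSC V d) (β : Finset V) : 0 ≤ X.weight β := by
  by_cases h : β ∈ X.faces ∧ β.card = d + 1
  · exact (X.weight_pos β h.1 h.2).le
  · rw [X.weight_zero β (by tauto)]

theorem Waux_nonneg (X : WSC V d) (t : ℕ) (α : Finset V) : 0 ≤ X.Waux t α := by
  induction t generalizing α with
  | zero => exact X.weight_nonneg α
  | succ t ih =>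
    simp only [Waux]
    apply mul_nonneg (by positivity)
    exact Finset.sum_nonneg fun β _ => ih β

theorem W_nonneg (X : WSC V d) (m : ℕ) (α : Finset V) : 0 ≤ X.W m α :=
  X.Waux_nonneg _ α

theorem W_rec (X : WSC V d) {m : ℕ} (hm : m ≤ d) (α : Finset V) :
    X.W m α = (1 / ((m + 1 : ℕ) : ℝ)) *
      ∑ β ∈ X.faces.filter (fun β => α ⊆ β ∧ β.card = m + 1), X.W (m + 1) β := by
  have h1 : d + 1 - m = (d - m) + 1 := by omega
  have h2 : d + 1 - (d - m) = m + 1 := by omega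
  have h3 : d + 1 - (m + 1) = d - m := by omega
  rw [W, h1]
  simp only [Waux]
  rw [h2, W, h3]

theorem sum_W_rec (X : WSC V d) {m : ℕ} (hm : m ≤ d) (α : Finset V) :
    ∑ β ∈ X.faces.filter (fun β => α ⊆ β ∧ β.card = m + 1), X.W (m + 1) β
      = ((m + 1 : ℕ) : ℝ) * X.W m α := by
  rw [X.W_rec hm α]
  have : ((m + 1 : ℕ) : ℝ) ≠ 0 := by positivity
  field_simp

theorem exists_superface (X : WSC V d) {α : Finset V} (hα : α ∈ X.faces) {m : ℕ}
    (h1 : α.card ≤ m) (h2 : m ≤ d + 1) :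
    ∃ β ∈ X.faces, α ⊆ β ∧ β.card = m := by
  obtain ⟨γ, hγ, hsub, hcard⟩ := X.pure α hα
  obtain ⟨β, hαβ, hβγ, hβc⟩ := Finset.exists_subsuperset_card_eq hsub h1 (by omega)
  exact ⟨β, X.down_closed γ hγ β hβγ, hαβ, hβc⟩

theorem W_pos_aux (X : WSC V d) :
    ∀ t m, ∀ α ∈ X.faces, d + 1 - m = t → m ≤ d + 1 → α.card = m → 0 < X.W m α := by
  intro t
  induction t with
  | zero =>
    intro m α hα ht hm hc
    have hm' : m = d + 1 := by omega
    subst hm'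
    have h0 : d + 1 - (d + 1) = 0 := by omega
    rw [W, h0]
    exact X.weight_pos α hα hc
  | succ t ih =>
    intro m α hα ht hm hc
    have hmd : m ≤ d := by omega
    rw [X.W_rec hmd α]
    apply mul_pos (by positivity)
    obtain ⟨β, hβ, hsub, hβc⟩ := X.exists_superface hα (m := m + 1) (by omega) (by omega)
    apply Finset.sum_pos' (fun γ _ => X.W_nonneg _ γ)
    refine ⟨β, Finset.mem_filter.2 ⟨hβ, hsub, hβc⟩, ?_⟩
    exact ih (m + 1) β hβ (by omega) (by omega) hβc

theorem W_pos (X : WSC V d) {m : ℕ} {α : Finset V} (hα : α ∈ X.faces)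
    (hc : α.card = m) (hm : m ≤ d + 1) : 0 < X.W m α :=
  X.W_pos_aux (d + 1 - m) m α hα rfl hm hc

end WSC
namespace WSC

variable {V : Type*} [DecidableEq V] [Fintype V] {d : ℕ}

theorem mem_linkVerts {X : WSC V d} {α : Finset V} {x : V} :
    x ∈ X.linkVerts α ↔ x ∉ α ∧ insert x α ∈ X.faces := by
  simp [linkVerts]

/-- Sum over superfaces of `α` of cardinality one more equals sum over link vertices. -/
theorem sum_superface (X : WSC V d) {α : Finset V} (hα : α ∈ X.faces) {m : ℕ}
    (hc : α.card = m) (g : Finset V → ℝ) :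
    ∑ β ∈ X.faces.filter (fun β => α ⊆ β ∧ β.card = m + 1), g β
      = ∑ x ∈ X.linkVerts α, g (insert x α) := by
  symm
  apply Finset.sum_nbij (fun x => insert x α)
  · intro x hx
    obtain ⟨hxα, hxf⟩ := mem_linkVerts.1 hx
    exact Finset.mem_filter.2 ⟨hxf, Finset.subset_insert _ _,
      by rw [Finset.card_insert_of_notMem hxα, hc]⟩
  · intro x hx y hy hxy
    obtain ⟨hxα, _⟩ := mem_linkVerts.1 (Finset.mem_coe.1 hx)
    obtain ⟨hyα, _⟩ := mem_linkVerts.1 (Finset.mem_coe.1 hy)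
    have : x ∈ insert y α := by
      have hxy' : insert x α = insert y α := hxy
      rw [← hxy']; exact Finset.mem_insert_self x α
    rcases Finset.mem_insert.1 this with h | h
    · exact h
    · exact absurd h hxα
  · intro β hβ
    obtain ⟨hβf, hsub, hβc⟩ := Finset.mem_filter.1 hβ
    have hne : (β \ α).Nonempty := by
      rw [← Finset.card_pos, Finset.card_sdiff_of_subset hsub, hβc, hc]; omega
    obtain ⟨x, hx⟩ := hne
    have hxβ : x ∈ β := (Finset.mem_sdiff.1 hx).1
    have hxα : x ∉ α := (Finset.mem_sdiff.1 hx).2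
    have hins : insert x α ⊆ β := Finset.insert_subset hxβ hsub
    have heq : insert x α = β := Finset.eq_of_subset_of_card_le hins
      (by rw [Finset.card_insert_of_notMem hxα, hβc, hc])
    refine ⟨x, Finset.mem_coe.2 (mem_linkVerts.2 ⟨hxα, heq ▸ hβf⟩), heq⟩
  · intro x hx; rfl

theorem choose_cast (m : ℕ) :
    ((Nat.choose (m + 2) m : ℕ) : ℝ) = ((m : ℝ) + 2) * ((m : ℝ) + 1) / 2 := by
  have h1 : Nat.choose (m + 2) m = Nat.choose (m + 2) 2 := by
    have := Nat.choose_symm (n := m + 2) (k := 2) (by omega)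
    simpa using this
  have h2 : Nat.choose (m + 2) 2 * 2 = (m + 2) * (m + 1) := by
    rw [Nat.choose_two_right]
    have he : 2 ∣ (m + 2) * (m + 1) := by
      rw [Nat.mul_comm]; exact (Nat.even_mul_succ_self (m + 1)).two_dvd
    show (m + 2) * (m + 1) / 2 * 2 = (m + 2) * (m + 1)
    exact Nat.div_mul_cancel he
  have : ((Nat.choose (m + 2) m : ℕ) : ℝ) * 2 = ((m : ℝ) + 2) * ((m : ℝ) + 1) := by
    rw [h1]
    exact_mod_cast congrArg (Nat.cast (R := ℝ)) h2
  linarith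

theorem linkPi_single (X : WSC V d) {α : Finset V} {m : ℕ}
    (hc : α.card = m) {x : V} (hx : x ∈ X.linkVerts α) :
    X.linkPi α {x} = X.W (m + 1) (insert x α) / (((m : ℝ) + 1) * X.W m α) := by
  obtain ⟨hxα, _⟩ := mem_linkVerts.1 hx
  have hu : α ∪ {x} = insert x α := by ext y; simp [or_comm]
  rw [linkPi, hu, Finset.card_insert_of_notMem hxα, hc]
  rw [Nat.choose_succ_self_right]
  push_cast
  ring_nf

theorem linkPi_single_pos (X : WSC V d) {α : Finset V} (hα : α ∈ X.faces) {m : ℕ}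
    (hc : α.card = m) (hm : m ≤ d) {x : V} (hx : x ∈ X.linkVerts α) :
    0 < X.linkPi α {x} := by
  obtain ⟨hxα, hxf⟩ := mem_linkVerts.1 hx
  rw [X.linkPi_single hc hx]
  apply div_pos
  · exact X.W_pos hxf (by rw [Finset.card_insert_of_notMem hxα, hc]) (by omega)
  · exact mul_pos (by positivity) (X.W_pos hα hc (by omega))

theorem sum_linkPi_single (X : WSC V d) {α : Finset V} (hα : α ∈ X.faces) {m : ℕ}
    (hc : α.card = m) (hm : m ≤ d) :
    ∑ x ∈ X.linkVerts α, X.linkPi α {x} = 1 := by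
  have h := X.sum_superface hα hc (X.W (m + 1))
  rw [X.sum_W_rec hm α] at h
  have hW : 0 < X.W m α := X.W_pos hα hc (by omega)
  calc ∑ x ∈ X.linkVerts α, X.linkPi α {x}
      = ∑ x ∈ X.linkVerts α, X.W (m + 1) (insert x α) / (((m : ℝ) + 1) * X.W m α) :=
        Finset.sum_congr rfl fun x hx => X.linkPi_single hc hx
    _ = (∑ x ∈ X.linkVerts α, X.W (m + 1) (insert x α)) / (((m : ℝ) + 1) * X.W m α) := by
        rw [Finset.sum_div]
    _ = 1 := by
        rw [← h]
        push_cast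
        field_simp

end WSC
namespace WSC

variable {V : Type*} [DecidableEq V] [Fintype V] {d : ℕ}

/-- The neighbour set of `x` in the link of `α` equals the link vertices of `insert x α`. -/
theorem linkNbr_eq (X : WSC V d) {α : Finset V} {x : V} (hx : x ∈ X.linkVerts α) :
    (X.linkVerts α).filter (fun y => y ≠ x ∧ insert y (insert x α) ∈ X.faces)
      = X.linkVerts (insert x α) := by
  obtain ⟨hxα, hxf⟩ := mem_linkVerts.1 hx
  ext y
  simp only [Finset.mem_filter, mem_linkVerts, Finset.mem_insert]
  constructor
  · rintro ⟨⟨hyα, _⟩, hyx, hyf⟩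
    exact ⟨by tauto, hyf⟩
  · rintro ⟨hy, hyf⟩
    push_neg at hy
    refine ⟨⟨hy.2, X.down_closed _ hyf _ ?_⟩, hy.1, hyf⟩
    intro z hz
    simp only [Finset.mem_insert] at hz ⊢
    tauto

theorem linkPi_pair (X : WSC V d) {α : Finset V} {m : ℕ} (hc : α.card = m)
    {x y : V} (hx : x ∉ α) (hy : y ∉ α) (hxy : y ≠ x) :
    X.linkPi α {x, y} = X.W (m + 2) (insert y (insert x α))
      / ((((m : ℝ) + 2) * ((m : ℝ) + 1) / 2) * X.W m α) := by
  have hu : α ∪ {x, y} = insert y (insert x α) := by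
    ext z; simp only [Finset.mem_union, Finset.mem_insert, Finset.mem_singleton]; tauto
  have hcard : (insert y (insert x α)).card = m + 2 := by
    rw [Finset.card_insert_of_notMem (by simp [hy, hxy]),
      Finset.card_insert_of_notMem hx, hc]
  rw [linkPi, hu, hcard, hc, choose_cast]

theorem sum_linkPi_pair (X : WSC V d) {α : Finset V} (hα : α ∈ X.faces) {m : ℕ}
    (hc : α.card = m) (hm : m + 1 ≤ d) {x : V} (hx : x ∈ X.linkVerts α) :
    ∑ y ∈ (X.linkVerts α).filter
        (fun y => y ≠ x ∧ insert y (insert x α) ∈ X.faces),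
      X.linkPi α {x, y} = 2 * X.linkPi α {x} := by
  obtain ⟨hxα, hxf⟩ := mem_linkVerts.1 hx
  have hcx : (insert x α).card = m + 1 := by
    rw [Finset.card_insert_of_notMem hxα, hc]
  have h0 := X.sum_superface hxf hcx (X.W (m + 2))
  rw [X.sum_W_rec hm (insert x α)] at h0
  rw [X.linkNbr_eq hx]
  have hW : 0 < X.W m α := X.W_pos hα hc (by omega)
  calc ∑ y ∈ X.linkVerts (insert x α), X.linkPi α {x, y}
      = ∑ y ∈ X.linkVerts (insert x α), X.W (m + 2) (insert y (insert x α))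
          / ((((m : ℝ) + 2) * ((m : ℝ) + 1) / 2) * X.W m α) := by
        apply Finset.sum_congr rfl
        intro y hy
        obtain ⟨hy1, _⟩ := mem_linkVerts.1 hy
        simp only [Finset.mem_insert] at hy1
        push_neg at hy1
        exact X.linkPi_pair hc hxα hy1.2 hy1.1
    _ = (((m : ℝ) + 2) * X.W (m + 1) (insert x α))
          / ((((m : ℝ) + 2) * ((m : ℝ) + 1) / 2) * X.W m α) := by
        rw [← Finset.sum_div, ← h0]; push_cast; ring_nf
    _ = 2 * X.linkPi α {x} := by
        rw [X.linkPi_single hc hx]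
        field_simp

/-- Swapping the order of summation over ordered pairs of link neighbours. -/
theorem link_pair_swap (X : WSC V d) {α : Finset V} (h : V → V → ℝ) :
    ∑ x ∈ X.linkVerts α, ∑ y ∈ (X.linkVerts α).filter
        (fun y => y ≠ x ∧ insert y (insert x α) ∈ X.faces), h x y
    = ∑ y ∈ X.linkVerts α, ∑ x ∈ (X.linkVerts α).filter
        (fun x => x ≠ y ∧ insert x (insert y α) ∈ X.faces), h x y := by
  apply Finset.sum_comm'
  intro x y
  simp only [Finset.mem_filter, mem_linkVerts]
  constructor
  · rintro ⟨⟨hxα, hxf⟩, ⟨hyα, hyf⟩, hyx, hyxf⟩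
    rw [Finset.insert_comm] at hyxf
    exact ⟨⟨⟨hxα, hxf⟩, Ne.symm hyx, hyxf⟩, hyα, hyf⟩
  · rintro ⟨⟨⟨hxα, hxf⟩, hxy, hxyf⟩, hyα, hyf⟩
    rw [Finset.insert_comm] at hxyf
    exact ⟨⟨hxα, hxf⟩, ⟨hyα, hyf⟩, Ne.symm hxy, hxyf⟩

end WSC
namespace WSC

variable {V : Type*} [DecidableEq V] [Fintype V] {d : ℕ}

theorem linkPi_nonneg (X : WSC V d) (α τ : Finset V) : 0 ≤ X.linkPi α τ :=
  div_nonneg (X.W_nonneg _ _) (mul_nonneg (Nat.cast_nonneg _) (X.W_nonneg _ _))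

/-- The quadratic form of the link walk. -/
theorem linkWalk_quad (X : WSC V d) {α : Finset V} (hα : α ∈ X.faces) {m : ℕ}
    (hc : α.card = m) (hm : m + 1 ≤ d) (F G : V → ℝ) :
    X.linkInner α F (X.linkWalk α G)
      = ∑ x ∈ X.linkVerts α, ∑ y ∈ (X.linkVerts α).filter
          (fun y => y ≠ x ∧ insert y (insert x α) ∈ X.faces),
        (X.linkPi α {x, y} / 2) * F x * G y := by
  rw [linkInner]
  apply Finset.sum_congr rfl
  intro x hx
  have hπ : 0 < X.linkPi α {x} := X.linkPi_single_pos hα hc (by omega) hx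
  rw [linkWalk, Finset.mul_sum]
  apply Finset.sum_congr rfl
  intro y hy
  field_simp

theorem linkWalk_row_sum (X : WSC V d) {α : Finset V} (hα : α ∈ X.faces) {m : ℕ}
    (hc : α.card = m) (hm : m + 1 ≤ d) {x : V} (hx : x ∈ X.linkVerts α) :
    ∑ y ∈ (X.linkVerts α).filter
        (fun y => y ≠ x ∧ insert y (insert x α) ∈ X.faces),
      X.linkPi α {x, y} / (2 * X.linkPi α {x}) = 1 := by
  have hπ : 0 < X.linkPi α {x} := X.linkPi_single_pos hα hc (by omega) hx
  rw [← Finset.sum_div, X.sum_linkPi_pair hα hc hm hx]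
  field_simp

/-- The link walk applied to `F - c` (constant shift). -/
theorem linkWalk_shift (X : WSC V d) {α : Finset V} (hα : α ∈ X.faces) {m : ℕ}
    (hc : α.card = m) (hm : m + 1 ≤ d) (F : V → ℝ) (c : ℝ) {x : V}
    (hx : x ∈ X.linkVerts α) :
    X.linkWalk α (fun z => F z - c) x = X.linkWalk α F x - c := by
  have hrow := X.linkWalk_row_sum hα hc hm hx
  simp only [linkWalk, mul_sub, Finset.sum_sub_distrib]
  congr 1
  rw [← Finset.sum_mul, hrow, one_mul]

/-- The stationary average is preserved by the walk. -/
theorem linkWalk_avg (X : WSC V d) {α : Finset V} (hα : α ∈ X.faces) {m : ℕ}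
    (hc : α.card = m) (hm : m + 1 ≤ d) (F : V → ℝ) :
    X.linkInner α (fun _ => 1) (X.linkWalk α F)
      = ∑ x ∈ X.linkVerts α, X.linkPi α {x} * F x := by
  rw [X.linkWalk_quad hα hc hm (fun _ => 1) F]
  have hswap := X.link_pair_swap (α := α)
    (fun x y => (X.linkPi α {x, y} / 2) * 1 * F y)
  rw [hswap]
  apply Finset.sum_congr rfl
  intro y hy
  have : ∀ x ∈ (X.linkVerts α).filter
      (fun x => x ≠ y ∧ insert x (insert y α) ∈ X.faces),
      X.linkPi α {x, y} / 2 * 1 * F y = X.linkPi α {y, x} / 2 * F y := by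
    intro x _; rw [Finset.pair_comm]; ring
  rw [Finset.sum_congr rfl this, ← Finset.sum_mul, ← Finset.sum_div,
    X.sum_linkPi_pair hα hc hm hy]
  ring

/-- The Rayleigh quotient bound `⟨F, M F⟩ ≤ ⟨F, F⟩`. -/
theorem linkWalk_rayleigh (X : WSC V d) {α : Finset V} (hα : α ∈ X.faces) {m : ℕ}
    (hc : α.card = m) (hm : m + 1 ≤ d) (F : V → ℝ) :
    X.linkInner α F (X.linkWalk α F) ≤ X.linkInner α F F := by
  rw [X.linkWalk_quad hα hc hm F F]
  have step1 : ∑ x ∈ X.linkVerts α, ∑ y ∈ (X.linkVerts α).filter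
        (fun y => y ≠ x ∧ insert y (insert x α) ∈ X.faces),
      (X.linkPi α {x, y} / 2) * F x * F y
    ≤ ∑ x ∈ X.linkVerts α, ∑ y ∈ (X.linkVerts α).filter
        (fun y => y ≠ x ∧ insert y (insert x α) ∈ X.faces),
      (X.linkPi α {x, y} / 2) * ((F x ^ 2 + F y ^ 2) / 2) := by
    apply Finset.sum_le_sum
    intro x _
    apply Finset.sum_le_sum
    intro y _
    have hπ : 0 ≤ X.linkPi α {x, y} / 2 := by
      have := X.linkPi_nonneg α {x, y}; linarith
    have hF : F x * F y ≤ (F x ^ 2 + F y ^ 2) / 2 := by nlinarith [sq_nonneg (F x - F y)]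
    calc X.linkPi α {x, y} / 2 * F x * F y = X.linkPi α {x, y} / 2 * (F x * F y) := by ring
      _ ≤ X.linkPi α {x, y} / 2 * ((F x ^ 2 + F y ^ 2) / 2) := by
          exact mul_le_mul_of_nonneg_left hF hπ
  refine step1.trans (le_of_eq ?_)
  have hx2 : ∑ x ∈ X.linkVerts α, ∑ y ∈ (X.linkVerts α).filter
        (fun y => y ≠ x ∧ insert y (insert x α) ∈ X.faces),
      (X.linkPi α {x, y} / 2) * (F x ^ 2)
      = ∑ x ∈ X.linkVerts α, X.linkPi α {x} * (F x ^ 2) := by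
    apply Finset.sum_congr rfl
    intro x hx
    rw [← Finset.sum_mul, ← Finset.sum_div, X.sum_linkPi_pair hα hc hm hx]
    ring
  have hy2 : ∑ x ∈ X.linkVerts α, ∑ y ∈ (X.linkVerts α).filter
        (fun y => y ≠ x ∧ insert y (insert x α) ∈ X.faces),
      (X.linkPi α {x, y} / 2) * (F y ^ 2)
      = ∑ y ∈ X.linkVerts α, X.linkPi α {y} * (F y ^ 2) := by
    rw [X.link_pair_swap (fun x y => (X.linkPi α {x, y} / 2) * (F y ^ 2))]
    apply Finset.sum_congr rfl
    intro y hy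
    have : ∀ x ∈ (X.linkVerts α).filter
        (fun x => x ≠ y ∧ insert x (insert y α) ∈ X.faces),
        X.linkPi α {x, y} / 2 * (F y ^ 2) = X.linkPi α {y, x} / 2 * (F y ^ 2) := by
      intro x _; rw [Finset.pair_comm]
    rw [Finset.sum_congr rfl this, ← Finset.sum_mul, ← Finset.sum_div,
      X.sum_linkPi_pair hα hc hm hy]
    ring
  calc ∑ x ∈ X.linkVerts α, ∑ y ∈ (X.linkVerts α).filter
        (fun y => y ≠ x ∧ insert y (insert x α) ∈ X.faces),
      (X.linkPi α {x, y} / 2) * ((F x ^ 2 + F y ^ 2) / 2)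
      = (∑ x ∈ X.linkVerts α, ∑ y ∈ (X.linkVerts α).filter
          (fun y => y ≠ x ∧ insert y (insert x α) ∈ X.faces),
        (X.linkPi α {x, y} / 2) * (F x ^ 2)) / 2
      + (∑ x ∈ X.linkVerts α, ∑ y ∈ (X.linkVerts α).filter
          (fun y => y ≠ x ∧ insert y (insert x α) ∈ X.faces),
        (X.linkPi α {x, y} / 2) * (F y ^ 2)) / 2 := by
        rw [Finset.sum_div, Finset.sum_div, ← Finset.sum_add_distrib]
        apply Finset.sum_congr rfl
        intro x _
        rw [Finset.sum_div, Finset.sum_div, ← Finset.sum_add_distrib]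
        apply Finset.sum_congr rfl
        intro y _
        ring
    _ = X.linkInner α F F := by
        rw [hx2, hy2, linkInner]
        rw [Finset.sum_div, ← Finset.sum_add_distrib]
        apply Finset.sum_congr rfl
        intro x _
        ring

end WSC
namespace WSC

variable {V : Type*} [DecidableEq V] [Fintype V] {d : ℕ}

theorem linkInner_self_nonneg (X : WSC V d) (α : Finset V) (F : V → ℝ) :
    0 ≤ X.linkInner α F F := by
  apply Finset.sum_nonneg
  intro x _
  have h1 := X.linkPi_nonneg α {x}
  nlinarith [mul_self_nonneg (F x)]

theorem linkLam2_mem_le_one (X : WSC V d) {α : Finset V} (hα : α ∈ X.faces) {m : ℕ}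
    (hc : α.card = m) (hm : m + 1 ≤ d) :
    ∀ r ∈ { r : ℝ | ∃ f : V → ℝ,
      X.linkInner α f (fun _ => 1) = 0 ∧ X.linkInner α f f ≠ 0 ∧
      r = X.linkInner α f (X.linkWalk α f) / X.linkInner α f f }, r ≤ 1 := by
  rintro r ⟨f, -, hff, rfl⟩
  have hpos : 0 < X.linkInner α f f := (X.linkInner_self_nonneg α f).lt_of_ne' hff
  rw [div_le_one hpos]
  exact X.linkWalk_rayleigh hα hc hm f

theorem linkLam2_le_one (X : WSC V d) {α : Finset V} (hα : α ∈ X.faces) {m : ℕ}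
    (hc : α.card = m) (hm : m + 1 ≤ d) : X.linkLam2 α ≤ 1 := by
  exact Real.sSup_le (X.linkLam2_mem_le_one hα hc hm) zero_le_one

theorem le_gammaC (X : WSC V d) {α : Finset V} (hα : α ∈ X.faces) {m : ℕ}
    (hc : α.card = m) (hm : m + 1 ≤ d) : X.linkLam2 α ≤ X.gammaC m := by
  apply le_csSup
  · refine ⟨1, ?_⟩
    rintro r ⟨β, hβ, hβc, rfl⟩
    exact X.linkLam2_le_one hβ hβc hm
  · exact ⟨α, hα, hc, rfl⟩

/-- The local inequality coming from the second eigenvalue of the link. -/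
theorem local_ineq (X : WSC V d) {α : Finset V} (hα : α ∈ X.faces) {m : ℕ}
    (hc : α.card = m) (hm : m + 1 ≤ d) (F : V → ℝ) :
    X.linkInner α F (X.linkWalk α F) - (∑ x ∈ X.linkVerts α, X.linkPi α {x} * F x) ^ 2
      ≤ X.gammaC m *
        (X.linkInner α F F - (∑ x ∈ X.linkVerts α, X.linkPi α {x} * F x) ^ 2) := by
  set c : ℝ := ∑ x ∈ X.linkVerts α, X.linkPi α {x} * F x with hcdef
  set G : V → ℝ := fun z => F z - c with hGdef
  have hπ1 : ∑ x ∈ X.linkVerts α, X.linkPi α {x} = 1 :=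
    X.sum_linkPi_single hα hc (by omega)
  have hsumG : ∑ x ∈ X.linkVerts α, X.linkPi α {x} * G x = 0 := by
    have : ∀ x ∈ X.linkVerts α, X.linkPi α {x} * G x
        = X.linkPi α {x} * F x - c * X.linkPi α {x} := by
      intro x _; simp only [hGdef]; ring
    rw [Finset.sum_congr rfl this, Finset.sum_sub_distrib, ← Finset.mul_sum, hπ1]
    simp [hcdef]
  have hGG : X.linkInner α G G = X.linkInner α F F - c ^ 2 := by
    have : ∀ x ∈ X.linkVerts α, X.linkPi α {x} * G x * G x
        = X.linkPi α {x} * F x * F x - 2 * c * (X.linkPi α {x} * F x)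
          + c ^ 2 * X.linkPi α {x} := by
      intro x _; simp only [hGdef]; ring
    rw [linkInner, Finset.sum_congr rfl this, Finset.sum_add_distrib,
      Finset.sum_sub_distrib, ← Finset.mul_sum, ← Finset.mul_sum, hπ1, ← hcdef]
    rw [linkInner]
    ring
  have havg : ∑ x ∈ X.linkVerts α, X.linkPi α {x} * X.linkWalk α F x = c := by
    have h := X.linkWalk_avg hα hc hm F
    rw [linkInner] at h
    rw [← hcdef] at h
    rw [← h]
    apply Finset.sum_congr rfl
    intro x _; ring
  have hGM : X.linkInner α G (X.linkWalk α G)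
      = X.linkInner α F (X.linkWalk α F) - c ^ 2 := by
    have hshift : ∀ x ∈ X.linkVerts α,
        X.linkPi α {x} * G x * X.linkWalk α G x
          = X.linkPi α {x} * F x * X.linkWalk α F x
            - c * (X.linkPi α {x} * F x)
            - c * (X.linkPi α {x} * X.linkWalk α F x)
            + c * c * X.linkPi α {x} := by
      intro x hx
      have hs := X.linkWalk_shift hα hc hm F c (x := x) hx
      simp only [hGdef] at hs ⊢
      rw [hs]
      ring
    rw [linkInner, Finset.sum_congr rfl hshift]
    rw [Finset.sum_add_distrib, Finset.sum_sub_distrib, Finset.sum_sub_distrib,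
      ← Finset.mul_sum, ← Finset.mul_sum, ← Finset.mul_sum, hπ1, havg, ← hcdef,
      linkInner]
    ring
  rw [← hGM, ← hGG]
  by_cases h0 : X.linkInner α G G = 0
  · have hz : ∀ x ∈ X.linkVerts α, G x = 0 := by
      intro x hx
      have hnn : ∀ y ∈ X.linkVerts α, 0 ≤ X.linkPi α {y} * G y * G y := by
        intro y _
        have := X.linkPi_nonneg α {y}
        nlinarith [mul_self_nonneg (G y)]
      have := (Finset.sum_eq_zero_iff_of_nonneg hnn).1 h0 x hx
      have hπpos : 0 < X.linkPi α {x} := X.linkPi_single_pos hα hc (by omega) hx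
      rw [mul_assoc] at this
      rcases mul_eq_zero.1 this with h | h
      · exact absurd h hπpos.ne'
      · exact mul_self_eq_zero.1 h
    have hWz : X.linkInner α G (X.linkWalk α G) = 0 := by
      rw [linkInner]
      apply Finset.sum_eq_zero
      intro x hx
      rw [hz x hx]
      ring
    rw [hWz, h0, mul_zero]
  · have hpos : 0 < X.linkInner α G G := (X.linkInner_self_nonneg α G).lt_of_ne' h0
    have hG1 : X.linkInner α G (fun _ => 1) = 0 := by
      rw [linkInner, ← hsumG]
      apply Finset.sum_congr rfl
      intro x _; ring
    have hmem : X.linkInner α G (X.linkWalk α G) / X.linkInner α G G ∈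
        { r : ℝ | ∃ f : V → ℝ,
          X.linkInner α f (fun _ => 1) = 0 ∧ X.linkInner α f f ≠ 0 ∧
          r = X.linkInner α f (X.linkWalk α f) / X.linkInner α f f } :=
      ⟨G, hG1, h0, rfl⟩
    have hbdd : BddAbove { r : ℝ | ∃ f : V → ℝ,
        X.linkInner α f (fun _ => 1) = 0 ∧ X.linkInner α f f ≠ 0 ∧
        r = X.linkInner α f (X.linkWalk α f) / X.linkInner α f f } :=
      ⟨1, X.linkLam2_mem_le_one hα hc hm⟩
    have h1 : X.linkInner α G (X.linkWalk α G) / X.linkInner α G G ≤ X.linkLam2 α :=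
      le_csSup hbdd hmem
    have h2 : X.linkLam2 α ≤ X.gammaC m := X.le_gammaC hα hc hm
    have := h1.trans h2
    calc X.linkInner α G (X.linkWalk α G)
        = (X.linkInner α G (X.linkWalk α G) / X.linkInner α G G)
          * X.linkInner α G G := by field_simp
      _ ≤ X.gammaC m * X.linkInner α G G :=
          mul_le_mul_of_nonneg_right this hpos.le

end WSC
namespace WSC

variable {V : Type*} [DecidableEq V] [Fintype V] {d : ℕ}

/-- Reindexing a sum over (face of cardinality `m+1`, vertex of it) as a sum over
(face of cardinality `m`, link vertex). -/
theorem sum_face_vertex (X : WSC V d) (m : ℕ) (F : Finset V → V → ℝ) :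
    ∑ β ∈ X.faces.filter (fun β => β.card = m + 1), ∑ x ∈ β, F (β.erase x) x
      = ∑ α ∈ X.faces.filter (fun α => α.card = m), ∑ x ∈ X.linkVerts α, F α x := by
  rw [Finset.sum_sigma', Finset.sum_sigma']
  apply Finset.sum_nbij' (i := fun p => (⟨p.1.erase p.2, p.2⟩ : Σ _ : Finset V, V))
    (j := fun q => (⟨insert q.2 q.1, q.2⟩ : Σ _ : Finset V, V))
  · rintro ⟨β, x⟩ hp
    obtain ⟨hβ, hx⟩ := Finset.mem_sigma.1 hp
    obtain ⟨hβf, hβc⟩ := Finset.mem_filter.1 hβ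
    refine Finset.mem_sigma.2 ⟨Finset.mem_filter.2 ⟨?_, ?_⟩, ?_⟩
    · exact X.down_closed β hβf _ (Finset.erase_subset _ _)
    · rw [Finset.card_erase_of_mem hx, hβc]; omega
    · exact mem_linkVerts.2 ⟨Finset.notMem_erase _ _, by rw [Finset.insert_erase hx]; exact hβf⟩
  · rintro ⟨α, x⟩ hq
    obtain ⟨hα, hx⟩ := Finset.mem_sigma.1 hq
    obtain ⟨hαf, hαc⟩ := Finset.mem_filter.1 hα
    obtain ⟨hxα, hxf⟩ := mem_linkVerts.1 hx
    refine Finset.mem_sigma.2 ⟨Finset.mem_filter.2 ⟨hxf, ?_⟩, Finset.mem_insert_self _ _⟩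
    rw [Finset.card_insert_of_notMem hxα, hαc]
  · rintro ⟨β, x⟩ hp
    obtain ⟨hβ, hx⟩ := Finset.mem_sigma.1 hp
    simp [Finset.insert_erase hx]
  · rintro ⟨α, x⟩ hq
    obtain ⟨hα, hx⟩ := Finset.mem_sigma.1 hq
    obtain ⟨hxα, _⟩ := mem_linkVerts.1 hx
    simp [Finset.erase_insert hxα]
  · rintro ⟨β, x⟩ hp
    rfl

end WSC
namespace WSC

variable {V : Type*} [DecidableEq V] [Fintype V] {d : ℕ}

theorem sum_link_W (X : WSC V d) {β : Finset V} (hβ : β ∈ X.faces) {m : ℕ}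
    (hc : β.card = m) (hm : m ≤ d) :
    ∑ x ∈ X.linkVerts β, X.W (m + 1) (insert x β) = ((m : ℝ) + 1) * X.W m β := by
  rw [← X.sum_superface hβ hc (X.W (m + 1)), X.sum_W_rec hm β]
  push_cast
  ring

theorem W_mul_link_sum (X : WSC V d) {α : Finset V} (hα : α ∈ X.faces) {m : ℕ}
    (hc : α.card = m) (hm : m ≤ d) (g : V → ℝ) :
    ∑ x ∈ X.linkVerts α, X.W (m + 1) (insert x α) * g x
      = (((m : ℝ) + 1) * X.W m α) * ∑ x ∈ X.linkVerts α, X.linkPi α {x} * g x := by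
  rw [Finset.mul_sum]
  apply Finset.sum_congr rfl
  intro x hx
  rw [X.linkPi_single hc hx]
  have hW : 0 < X.W m α := X.W_pos hα hc (by omega)
  field_simp

theorem downOp_eq (X : WSC V d) {α : Finset V} (hα : α ∈ X.faces) {m : ℕ}
    (hc : α.card = m) (hm : m ≤ d) (g : Finset V → ℝ) :
    X.downOp g α = ∑ x ∈ X.linkVerts α, X.linkPi α {x} * g (insert x α) := by
  rw [downOp]
  simp only [hc]
  rw [X.sum_superface hα hc (fun β => X.W (m + 1) β * g β / (((m : ℝ) + 1) * X.W m α))]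
  apply Finset.sum_congr rfl
  intro x hx
  rw [X.linkPi_single hc hx]
  ring

/-- Localization of the inner product. -/
theorem inn_self_eq (X : WSC V d) {k : ℕ} (hk : k < d) (f : Finset V → ℝ) :
    X.inn (k + 1) f f = ∑ α ∈ X.faces.filter (fun α => α.card = k),
      X.W k α * X.linkInner α (fun x => f (insert x α)) (fun x => f (insert x α)) := by
  rw [inn]
  have expand : ∀ β ∈ X.faces.filter (fun β => β.card = k + 1),
      X.W (k + 1) β * f β * f β
        = ∑ x ∈ β, (1 / ((k : ℝ) + 1)) * (X.W (k + 1) (insert x (β.erase x))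
            * f (insert x (β.erase x)) * f (insert x (β.erase x))) := by
    intro β hβ
    obtain ⟨hβf, hβc⟩ := Finset.mem_filter.1 hβ
    have : ∀ x ∈ β, (1 / ((k : ℝ) + 1)) * (X.W (k + 1) (insert x (β.erase x))
        * f (insert x (β.erase x)) * f (insert x (β.erase x)))
        = (1 / ((k : ℝ) + 1)) * (X.W (k + 1) β * f β * f β) := by
      intro x hx
      rw [Finset.insert_erase hx]
    rw [Finset.sum_congr rfl this, Finset.sum_const, hβc, nsmul_eq_mul]
    push_cast
    field_simp
  rw [Finset.sum_congr rfl expand,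
    X.sum_face_vertex k (fun α x => (1 / ((k : ℝ) + 1)) *
      (X.W (k + 1) (insert x α) * f (insert x α) * f (insert x α)))]
  apply Finset.sum_congr rfl
  intro α hα
  obtain ⟨hαf, hαc⟩ := Finset.mem_filter.1 hα
  have h1 : ∀ x ∈ X.linkVerts α, (1 / ((k : ℝ) + 1)) *
      (X.W (k + 1) (insert x α) * f (insert x α) * f (insert x α))
      = (1 / ((k : ℝ) + 1)) * (X.W (k + 1) (insert x α)
        * (f (insert x α) * f (insert x α))) := by
    intro x _; ring
  rw [Finset.sum_congr rfl h1, ← Finset.mul_sum,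
    X.W_mul_link_sum hαf hαc (by omega) (fun x => f (insert x α) * f (insert x α))]
  rw [linkInner]
  have h2 : ∀ x ∈ X.linkVerts α, X.linkPi α {x} * f (insert x α) * f (insert x α)
      = X.linkPi α {x} * (f (insert x α) * f (insert x α)) := by
    intro x _; ring
  rw [Finset.sum_congr rfl h2]
  field_simp
  all_goals ring

/-- Localization of the down-up walk form. -/
theorem inn_downUp_eq (X : WSC V d) {k : ℕ} (hk : k < d) (f : Finset V → ℝ) :
    X.inn (k + 1) f (X.downUp f) = ∑ α ∈ X.faces.filter (fun α => α.card = k),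
      X.W k α * (∑ x ∈ X.linkVerts α, X.linkPi α {x} * f (insert x α)) ^ 2 := by
  rw [inn]
  have expand : ∀ β ∈ X.faces.filter (fun β => β.card = k + 1),
      X.W (k + 1) β * f β * X.downUp f β
        = ∑ x ∈ β, (1 / ((k : ℝ) + 1)) * (X.W (k + 1) (insert x (β.erase x))
            * f (insert x (β.erase x)) * X.downOp f (β.erase x)) := by
    intro β hβ
    obtain ⟨hβf, hβc⟩ := Finset.mem_filter.1 hβ
    have : ∀ x ∈ β, (1 / ((k : ℝ) + 1)) * (X.W (k + 1) (insert x (β.erase x))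
        * f (insert x (β.erase x)) * X.downOp f (β.erase x))
        = X.W (k + 1) β * f β * ((1 / ((k : ℝ) + 1)) * X.downOp f (β.erase x)) := by
      intro x hx
      rw [Finset.insert_erase hx]
      ring
    rw [Finset.sum_congr rfl this, ← Finset.mul_sum, downUp, upOp, hβc]
    push_cast
    rw [Finset.mul_sum]
  rw [Finset.sum_congr rfl expand,
    X.sum_face_vertex k (fun α x => (1 / ((k : ℝ) + 1)) *
      (X.W (k + 1) (insert x α) * f (insert x α) * X.downOp f α))]
  apply Finset.sum_congr rfl
  intro α hα
  obtain ⟨hαf, hαc⟩ := Finset.mem_filter.1 hα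
  have h1 : ∀ x ∈ X.linkVerts α, (1 / ((k : ℝ) + 1)) *
      (X.W (k + 1) (insert x α) * f (insert x α) * X.downOp f α)
      = ((1 / ((k : ℝ) + 1)) * X.downOp f α)
        * (X.W (k + 1) (insert x α) * f (insert x α)) := by
    intro x _; ring
  rw [Finset.sum_congr rfl h1, ← Finset.mul_sum,
    X.W_mul_link_sum hαf hαc (by omega) (fun x => f (insert x α)),
    X.downOp_eq hαf hαc (by omega) f]
  field_simp
  all_goals ring

end WSC
namespace WSC

variable {V : Type*} [DecidableEq V] [Fintype V] {d : ℕ}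

theorem sum_face_super (X : WSC V d) (m : ℕ) (h : Finset V → Finset V → ℝ) :
    ∑ β ∈ X.faces.filter (fun β => β.card = m + 1),
      ∑ σ ∈ X.faces.filter (fun σ => β ⊆ σ ∧ σ.card = m + 2), h β σ
    = ∑ σ ∈ X.faces.filter (fun σ => σ.card = m + 2), ∑ x ∈ σ, h (σ.erase x) σ := by
  have step1 : ∀ β ∈ X.faces.filter (fun β => β.card = m + 1),
      ∑ σ ∈ X.faces.filter (fun σ => β ⊆ σ ∧ σ.card = m + 2), h β σ
        = ∑ x ∈ X.linkVerts β, h β (insert x β) := by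
    intro β hβ
    obtain ⟨hβf, hβc⟩ := Finset.mem_filter.1 hβ
    exact X.sum_superface hβf hβc (h β)
  rw [Finset.sum_congr rfl step1,
    ← X.sum_face_vertex (m + 1) (fun α x => h α (insert x α))]
  apply Finset.sum_congr rfl
  intro σ hσ
  apply Finset.sum_congr rfl
  intro x hx
  rw [Finset.insert_erase hx]

theorem inn_upDown_eq1 (X : WSC V d) {k : ℕ} (hk : k < d) (f : Finset V → ℝ) :
    X.inn (k + 1) f (X.upDown f)
      = ∑ σ ∈ X.faces.filter (fun σ => σ.card = k + 2),
          X.W (k + 2) σ * (upOp f σ * upOp f σ) := by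
  rw [inn]
  have expand : ∀ β ∈ X.faces.filter (fun β => β.card = k + 1),
      X.W (k + 1) β * f β * X.upDown f β
        = ∑ σ ∈ X.faces.filter (fun σ => β ⊆ σ ∧ σ.card = k + 2),
            (1 / ((k : ℝ) + 2)) * (X.W (k + 2) σ * upOp f σ * f β) := by
    intro β hβ
    obtain ⟨hβf, hβc⟩ := Finset.mem_filter.1 hβ
    have hW : 0 < X.W (k + 1) β := X.W_pos hβf hβc (by omega)
    rw [upDown, downOp, hβc, Finset.mul_sum]
    apply Finset.sum_congr rfl
    intro σ hσ
    push_cast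
    field_simp
    ring
  rw [Finset.sum_congr rfl expand,
    X.sum_face_super k (fun β σ => (1 / ((k : ℝ) + 2)) *
      (X.W (k + 2) σ * upOp f σ * f β))]
  apply Finset.sum_congr rfl
  intro σ hσ
  obtain ⟨hσf, hσc⟩ := Finset.mem_filter.1 hσ
  have h1 : ∀ x ∈ σ, (1 / ((k : ℝ) + 2)) * (X.W (k + 2) σ * upOp f σ * f (σ.erase x))
      = (X.W (k + 2) σ * upOp f σ) * ((1 / ((k : ℝ) + 2)) * f (σ.erase x)) := by
    intro x _; ring
  rw [Finset.sum_congr rfl h1, ← Finset.mul_sum]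
  have h2 : ∑ x ∈ σ, (1 / ((k : ℝ) + 2)) * f (σ.erase x) = upOp f σ := by
    rw [upOp, hσc, Finset.mul_sum]
    push_cast
    rfl
  rw [h2]
  ring

end WSC
namespace WSC

variable {V : Type*} [DecidableEq V] [Fintype V] {d : ℕ}

theorem upDown_diag (X : WSC V d) {k : ℕ} (hk : k < d) (f : Finset V → ℝ) :
    ∑ σ ∈ X.faces.filter (fun σ => σ.card = k + 2), ∑ x ∈ σ,
        (1 / ((k : ℝ) + 2)) ^ 2 * (X.W (k + 2) σ * f (σ.erase x) * f (σ.erase x))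
      = (1 / ((k : ℝ) + 2)) * X.inn (k + 1) f f := by
  have congr1 : ∀ σ ∈ X.faces.filter (fun σ => σ.card = k + 2), ∑ x ∈ σ,
      (1 / ((k : ℝ) + 2)) ^ 2 * (X.W (k + 2) σ * f (σ.erase x) * f (σ.erase x))
      = ∑ x ∈ σ, (1 / ((k : ℝ) + 2)) ^ 2
          * (X.W (k + 2) (insert x (σ.erase x)) * f (σ.erase x) * f (σ.erase x)) := by
    intro σ _
    apply Finset.sum_congr rfl
    intro x hx
    rw [Finset.insert_erase hx]
  rw [Finset.sum_congr rfl congr1,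
    X.sum_face_vertex (k + 1) (fun α x => (1 / ((k : ℝ) + 2)) ^ 2
      * (X.W (k + 2) (insert x α) * f α * f α)), inn, Finset.mul_sum]
  apply Finset.sum_congr rfl
  intro β hβ
  obtain ⟨hβf, hβc⟩ := Finset.mem_filter.1 hβ
  have h1 : ∀ x ∈ X.linkVerts β, (1 / ((k : ℝ) + 2)) ^ 2
      * (X.W (k + 2) (insert x β) * f β * f β)
      = X.W (k + 2) (insert x β) * ((1 / ((k : ℝ) + 2)) ^ 2 * (f β * f β)) := by
    intro x _; ring
  rw [Finset.sum_congr rfl h1, ← Finset.sum_mul, X.sum_link_W hβf hβc (by omega)]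
  push_cast
  field_simp
  ring

theorem upDown_offdiag (X : WSC V d) {k : ℕ} (hk : k < d) (f : Finset V → ℝ) :
    ∑ σ ∈ X.faces.filter (fun σ => σ.card = k + 2), ∑ x ∈ σ, ∑ y ∈ σ.erase x,
        (1 / ((k : ℝ) + 2)) ^ 2 * (X.W (k + 2) σ * f (σ.erase x) * f (σ.erase y))
      = (((k : ℝ) + 1) / ((k : ℝ) + 2)) *
          ∑ α ∈ X.faces.filter (fun α => α.card = k),
            X.W k α * X.linkInner α (fun x => f (insert x α))
              (X.linkWalk α (fun x => f (insert x α))) := by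
  have congr1 : ∀ σ ∈ X.faces.filter (fun σ => σ.card = k + 2), ∑ x ∈ σ,
      ∑ y ∈ σ.erase x, (1 / ((k : ℝ) + 2)) ^ 2
        * (X.W (k + 2) σ * f (σ.erase x) * f (σ.erase y))
      = ∑ x ∈ σ, ∑ y ∈ σ.erase x, (1 / ((k : ℝ) + 2)) ^ 2
          * (X.W (k + 2) (insert x (σ.erase x)) * f (σ.erase x)
            * f ((insert x (σ.erase x)).erase y)) := by
    intro σ _
    apply Finset.sum_congr rfl
    intro x hx
    rw [Finset.insert_erase hx]
  rw [Finset.sum_congr rfl congr1,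
    X.sum_face_vertex (k + 1) (fun α x => ∑ y ∈ α, (1 / ((k : ℝ) + 2)) ^ 2
      * (X.W (k + 2) (insert x α) * f α * f ((insert x α).erase y)))]
  have congr2 : ∀ β ∈ X.faces.filter (fun β => β.card = k + 1),
      ∑ x ∈ X.linkVerts β, ∑ y ∈ β, (1 / ((k : ℝ) + 2)) ^ 2
        * (X.W (k + 2) (insert x β) * f β * f ((insert x β).erase y))
      = ∑ y ∈ β, ∑ x ∈ X.linkVerts (insert y (β.erase y)), (1 / ((k : ℝ) + 2)) ^ 2
          * (X.W (k + 2) (insert x (insert y (β.erase y)))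
            * f (insert y (β.erase y))
            * f ((insert x (insert y (β.erase y))).erase y)) := by
    intro β _
    rw [Finset.sum_comm]
    apply Finset.sum_congr rfl
    intro y hy
    rw [Finset.insert_erase hy]
  rw [Finset.sum_congr rfl congr2,
    X.sum_face_vertex k (fun α y => ∑ x ∈ X.linkVerts (insert y α),
      (1 / ((k : ℝ) + 2)) ^ 2 * (X.W (k + 2) (insert x (insert y α))
        * f (insert y α) * f ((insert x (insert y α)).erase y))),
    Finset.mul_sum]
  apply Finset.sum_congr rfl
  intro α hα
  obtain ⟨hαf, hαc⟩ := Finset.mem_filter.1 hα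
  rw [X.linkWalk_quad hαf hαc (by omega) (fun x => f (insert x α))
    (fun x => f (insert x α)), Finset.mul_sum, Finset.mul_sum]
  apply Finset.sum_congr rfl
  intro y hy
  obtain ⟨hyα, hyf⟩ := mem_linkVerts.1 hy
  rw [← X.linkNbr_eq hy, Finset.mul_sum, Finset.mul_sum]
  apply Finset.sum_congr rfl
  intro x hx
  obtain ⟨hxLV, hxy, hxf⟩ := Finset.mem_filter.1 hx
  obtain ⟨hxα, _⟩ := mem_linkVerts.1 hxLV
  have he : (insert x (insert y α)).erase y = insert x α := by
    rw [Finset.insert_comm, Finset.erase_insert]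
    simp only [Finset.mem_insert]
    push_neg
    exact ⟨fun hyx => hxy hyx.symm, hyα⟩
  rw [he, X.linkPi_pair hαc hyα hxα hxy]
  have hW : 0 < X.W k α := X.W_pos hαf hαc (by omega)
  field_simp

end WSC
namespace WSC

variable {V : Type*} [DecidableEq V] [Fintype V] {d : ℕ}

theorem inn_sub (X : WSC V d) (m : ℕ) (f g h : Finset V → ℝ) :
    X.inn m f (fun a => g a - h a) = X.inn m f g - X.inn m f h := by
  rw [inn, inn, inn, ← Finset.sum_sub_distrib]
  apply Finset.sum_congr rfl
  intro a _
  ring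

theorem inn_upDown_eq (X : WSC V d) {k : ℕ} (hk : k < d) (f : Finset V → ℝ) :
    X.inn (k + 1) f (X.upDown f)
      = (1 / ((k : ℝ) + 2)) * X.inn (k + 1) f f
        + (((k : ℝ) + 1) / ((k : ℝ) + 2)) *
          ∑ α ∈ X.faces.filter (fun α => α.card = k),
            X.W k α * X.linkInner α (fun x => f (insert x α))
              (X.linkWalk α (fun x => f (insert x α))) := by
  rw [X.inn_upDown_eq1 hk f]
  have expand : ∀ σ ∈ X.faces.filter (fun σ => σ.card = k + 2),
      X.W (k + 2) σ * (upOp f σ * upOp f σ)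
        = (∑ x ∈ σ, (1 / ((k : ℝ) + 2)) ^ 2
            * (X.W (k + 2) σ * f (σ.erase x) * f (σ.erase x)))
          + ∑ x ∈ σ, ∑ y ∈ σ.erase x, (1 / ((k : ℝ) + 2)) ^ 2
              * (X.W (k + 2) σ * f (σ.erase x) * f (σ.erase y)) := by
    intro σ hσ
    obtain ⟨hσf, hσc⟩ := Finset.mem_filter.1 hσ
    have hcast : ((σ.card : ℕ) : ℝ) = (k : ℝ) + 2 := by rw [hσc]; push_cast; ring
    calc X.W (k + 2) σ * (upOp f σ * upOp f σ)
        = (1 / ((k : ℝ) + 2)) ^ 2 * (X.W (k + 2) σ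
            * ((∑ x ∈ σ, f (σ.erase x)) * (∑ y ∈ σ, f (σ.erase y)))) := by
          rw [upOp, hcast]; ring
      _ = (1 / ((k : ℝ) + 2)) ^ 2 * (X.W (k + 2) σ
            * (∑ x ∈ σ, ∑ y ∈ σ, f (σ.erase x) * f (σ.erase y))) := by
          rw [Finset.sum_mul_sum]
      _ = ∑ x ∈ σ, (1 / ((k : ℝ) + 2)) ^ 2
            * (X.W (k + 2) σ * ∑ y ∈ σ, f (σ.erase x) * f (σ.erase y)) := by
          rw [Finset.mul_sum, Finset.mul_sum]
      _ = ∑ x ∈ σ, ((1 / ((k : ℝ) + 2)) ^ 2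
            * (X.W (k + 2) σ * f (σ.erase x) * f (σ.erase x))
          + ∑ y ∈ σ.erase x, (1 / ((k : ℝ) + 2)) ^ 2
              * (X.W (k + 2) σ * f (σ.erase x) * f (σ.erase y))) := by
          apply Finset.sum_congr rfl
          intro x hx
          rw [← Finset.add_sum_erase σ (fun y => f (σ.erase x) * f (σ.erase y)) hx,
            mul_add, mul_add, Finset.mul_sum, Finset.mul_sum]
          congr 1
          · ring
          · apply Finset.sum_congr rfl
            intro y _
            ring
      _ = _ := Finset.sum_add_distrib
  rw [Finset.sum_congr rfl expand, Finset.sum_add_distrib,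
    X.upDown_diag hk f, X.upDown_offdiag hk f]

theorem inn_nonLazy_eq (X : WSC V d) {k : ℕ} (hk : k < d) (f : Finset V → ℝ) :
    X.inn (k + 1) f (X.nonLazy k f)
      = ∑ α ∈ X.faces.filter (fun α => α.card = k),
          X.W k α * X.linkInner α (fun x => f (insert x α))
            (X.linkWalk α (fun x => f (insert x α))) := by
  have hk1 : ((k : ℝ) + 1) ≠ 0 := by positivity
  have hk2 : ((k : ℝ) + 2) ≠ 0 := by positivity
  have expand : ∀ β ∈ X.faces.filter (fun β => β.card = k + 1),
      X.W (k + 1) β * f β * X.nonLazy k f β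
        = (((k : ℝ) + 2) / ((k : ℝ) + 1)) * (X.W (k + 1) β * f β * X.upDown f β)
          - (1 / ((k : ℝ) + 1)) * (X.W (k + 1) β * f β * f β) := by
    intro β _
    rw [nonLazy]
    field_simp
  rw [inn, Finset.sum_congr rfl expand, Finset.sum_sub_distrib,
    ← Finset.mul_sum, ← Finset.mul_sum]
  have e1 : ∑ β ∈ X.faces.filter (fun β => β.card = k + 1),
      X.W (k + 1) β * f β * X.upDown f β = X.inn (k + 1) f (X.upDown f) := rfl
  have e2 : ∑ β ∈ X.faces.filter (fun β => β.card = k + 1),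
      X.W (k + 1) β * f β * f β = X.inn (k + 1) f f := rfl
  rw [e1, e2, X.inn_upDown_eq hk f]
  field_simp
  ring

end WSC
/-- **Key lemma.** Let `(X, Π)` be a weighted pure `d`-dimensional simplicial
complex and `0 ≤ k ≤ d-1`.  Then `N_k - P∨_k ⪯_{Π_k} γ_{k-1} (I - P∨_k)`: for
every `f : ℝ^{X(k)}`,
`⟨f, (N_k - P∨_k) f⟩_{Π_k} ≤ γ_{k-1} ⟨f, (I - P∨_k) f⟩_{Π_k}`.
(Here `γ_{k-1} = X.gammaC k`, and functions on `X(k)` are functions on faces of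
cardinality `k + 1`.) -/
theorem nonLazy_sub_downUp_le {V : Type*} [DecidableEq V] [Fintype V] {d : ℕ}
    (X : WSC V d) (k : ℕ) (hk : k < d) (f : Finset V → ℝ) :
    X.inn (k + 1) f (fun α => X.nonLazy k f α - X.downUp f α) ≤
      X.gammaC k * X.inn (k + 1) f (fun α => f α - X.downUp f α) := by
  rw [X.inn_sub (k + 1) f (X.nonLazy k f) (X.downUp f),
    X.inn_sub (k + 1) f f (X.downUp f),
    X.inn_nonLazy_eq hk f, X.inn_downUp_eq hk f, X.inn_self_eq hk f,
    ← Finset.sum_sub_distrib, ← Finset.sum_sub_distrib, Finset.mul_sum]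
  apply Finset.sum_le_sum
  intro α hα
  obtain ⟨hαf, hαc⟩ := Finset.mem_filter.1 hα
  have hloc := X.local_ineq hαf hαc (by omega) (fun x => f (insert x α))
  have hW : 0 ≤ X.W k α := X.W_nonneg k α
  have h' := mul_le_mul_of_nonneg_left hloc hW
  calc X.W k α * X.linkInner α (fun x => f (insert x α))
          (X.linkWalk α (fun x => f (insert x α)))
        - X.W k α * (∑ x ∈ X.linkVerts α, X.linkPi α {x} * f (insert x α)) ^ 2
      = X.W k α * (X.linkInner α (fun x => f (insert x α))
            (X.linkWalk α (fun x => f (insert x α)))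
          - (∑ x ∈ X.linkVerts α, X.linkPi α {x} * f (insert x α)) ^ 2) := by ring
    _ ≤ X.W k α * (X.gammaC k * (X.linkInner α (fun x => f (insert x α))
            (fun x => f (insert x α))
          - (∑ x ∈ X.linkVerts α, X.linkPi α {x} * f (insert x α)) ^ 2)) := h'
    _ = X.gammaC k * (X.W k α * X.linkInner α (fun x => f (insert x α))
            (fun x => f (insert x α))
          - X.W k α * (∑ x ∈ X.linkVerts α, X.linkPi α {x} * f (insert x α)) ^ 2) := by
        ring
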